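/- Let f : I → I be a C² unimodal map with quadratic minimum at c. If f³(c) > f²(c), then the forward orbit (fᵏ(c))_{k≥0} converges to a point p ∈ I with f(p) = p and |f'(p)| ≤ 1 (a fixed attracting or parabolic sink). -/

import Mathlib

open Set Filter Topology

/-- A `C²` unimodal map `f : [a,b] → [a,b]` with quadratic minimum at an interior point
`c`: `f` is `C²`, `c` is the unique critical point (`f'(c) = 0`, `f' ≠ 0` elsewhere),
`f''(c) > 0`, and `f` is strictly decreasing on `[a,c]` and strictly increasing on
`[c,b]`. -/
structure UnimodalMin (f : ℝ → ℝ) (a b c : ℝ) : Prop where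
  hab : a < b
  hc : c ∈ Ioo a b
  maps : MapsTo f (Icc a b) (Icc a b)
  smooth : ContDiffOn ℝ 2 f (Icc a b)
  crit : derivWithin f (Icc a b) c = 0
  noncrit : ∀ x ∈ Icc a b, x ≠ c → derivWithin f (Icc a b) x ≠ 0
  second : 0 < iteratedDerivWithin 2 f (Icc a b) c
  anti : StrictAntiOn f (Icc a c)
  mono : StrictMonoOn f (Icc c b)

/-- Lemma 6.1 iii) (sink combin): if `f³(c) > f²(c)`, then the forward orbit of `c`
converges to a fixed attracting or parabolic sink. -/
theorem stmt9 (f : ℝ → ℝ) (a b c : ℝ) (h : UnimodalMin f a b c)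
    (hfc : f^[2] c < f^[3] c) :
    ∃ p ∈ Icc a b,
      Tendsto (fun k => f^[k] c) atTop (nhds p) ∧
      f p = p ∧
      |derivWithin f (Icc a b) p| ≤ 1 := by
  have hcmem : c ∈ Icc a b := ⟨h.hc.1.le, h.hc.2.le⟩
  -- all iterates stay in the interval
  have hmem : ∀ k, f^[k] c ∈ Icc a b := by
    intro k
    induction k with
    | zero => simpa using hcmem
    | succ n ih => rw [Function.iterate_succ_apply']; exact h.maps ih
  -- f c is the minimum value
  have hmin : ∀ x ∈ Icc a b, f c ≤ f x := by
    intro x hx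
    rcases le_or_gt x c with hxc | hxc
    · exact h.anti.antitoneOn ⟨hx.1, hxc⟩ ⟨h.hc.1.le, le_rfl⟩ hxc
    · exact h.mono.monotoneOn ⟨le_rfl, h.hc.2.le⟩ ⟨hxc.le, hx.2⟩ hxc.le
  -- c ≤ f²(c)
  have h2 : c ≤ f^[2] c := by
    by_contra h2'
    push_neg at h2'
    have hfc1 : f c ≤ f^[2] c := by
      have := hmin (f c) (hmem 1)
      simpa [Function.iterate_succ_apply'] using this
    rcases le_or_gt c (f c) with hcf | hcf
    · exact absurd (le_trans hcf hfc1) (not_le.mpr h2')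
    · rcases eq_or_lt_of_le hfc1 with heq | hlt
      · have : f^[3] c = f^[2] c := by
          have : f (f^[2] c) = f (f c) := by rw [← heq]
          simpa [Function.iterate_succ_apply'] using this
        exact absurd hfc (by rw [this]; exact lt_irrefl _)
      · have ha1 : f c ∈ Icc a c := ⟨(hmem 1).1, hcf.le⟩
        have ha2 : f^[2] c ∈ Icc a c := ⟨(hmem 2).1, h2'.le⟩
        have : f (f^[2] c) < f (f c) := h.anti ha1 ha2 hlt
        have h3 : f^[3] c < f^[2] c := by
          simpa [Function.iterate_succ_apply'] using this
        exact absurd hfc (not_lt.mpr h3.le)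
  -- key induction: the tail orbit stays in [c,b] and is strictly increasing
  have key : ∀ k, f^[k + 2] c ∈ Icc c b ∧ f^[k + 2] c < f^[k + 3] c := by
    intro k
    induction k with
    | zero => exact ⟨⟨h2, (hmem 2).2⟩, hfc⟩
    | succ n ih =>
      obtain ⟨hx, hlt⟩ := ih
      have hy : f^[n + 3] c ∈ Icc c b := ⟨le_trans hx.1 hlt.le, (hmem (n + 3)).2⟩
      refine ⟨hy, ?_⟩
      have := h.mono hx hy hlt
      have e1 : f (f^[n + 2] c) = f^[n + 3] c := (Function.iterate_succ_apply' f (n + 2) c).symm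
      have e2 : f (f^[n + 3] c) = f^[n + 4] c := (Function.iterate_succ_apply' f (n + 3) c).symm
      rw [e1, e2] at this
      exact this
  set g : ℕ → ℝ := fun k => f^[k + 2] c with hg
  have hgmono : StrictMono g := strictMono_nat_of_lt_succ fun n => (key n).2
  have hbdd : BddAbove (Set.range g) := by
    refine ⟨b, ?_⟩
    rintro x ⟨k, rfl⟩
    exact (hmem (k + 2)).2
  set p : ℝ := ⨆ k, g k with hp
  have ht : Tendsto g atTop (nhds p) := tendsto_atTop_ciSup hgmono.monotone hbdd
  have hgle : ∀ k, g k ≤ p := fun k => le_ciSup hbdd k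
  have hglt : ∀ k, g k < p := fun k => lt_of_lt_of_le (hgmono (Nat.lt_succ_self k)) (hgle (k + 1))
  have hpmem : p ∈ Icc a b :=
    isClosed_Icc.mem_of_tendsto ht (Eventually.of_forall fun k => hmem (k + 2))
  -- the full orbit converges
  have htfull : Tendsto (fun k => f^[k] c) atTop (nhds p) := by
    have := (tendsto_add_atTop_iff_nat (f := fun k => f^[k] c) (l := nhds p) 2).mp ht
    exact this
  -- p is a fixed point
  have hgin : ∀ᶠ k in atTop, g k ∈ Icc a b := Eventually.of_forall fun k => hmem (k + 2)
  have t1 : Tendsto g atTop (𝓝[Icc a b] p) :=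
    tendsto_nhdsWithin_of_tendsto_nhds_of_eventually_within _ ht hgin
  have cw : ContinuousWithinAt f (Icc a b) p := h.smooth.continuousOn p hpmem
  have t2 : Tendsto (fun k => f (g k)) atTop (nhds (f p)) := cw.tendsto.comp t1
  have t2' : Tendsto (fun k => f (g k)) atTop (nhds p) := by
    have : (fun k => f (g k)) = fun k => g (k + 1) := by
      funext k
      simp only [hg]
      rw [← Function.iterate_succ_apply' f (k + 2) c]
    rw [this]
    exact ht.comp (tendsto_add_atTop_nat 1)
  have hfp : f p = p := tendsto_nhds_unique t2 t2'
  -- derivative bound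
  have hdiff : DifferentiableOn ℝ f (Icc a b) := h.smooth.differentiableOn two_ne_zero
  set d : ℝ := derivWithin f (Icc a b) p with hd
  have hder : HasDerivWithinAt f d (Icc a b) p := (hdiff p hpmem).hasDerivWithinAt
  have hs : Tendsto (slope f p) (𝓝[Icc a b \ {p}] p) (nhds d) :=
    hasDerivWithinAt_iff_tendsto_slope.mp hder
  have t3 : Tendsto g atTop (𝓝[Icc a b \ {p}] p) :=
    tendsto_nhdsWithin_of_tendsto_nhds_of_eventually_within _ ht
      (Eventually.of_forall fun k => ⟨hmem (k + 2), fun hk => absurd hk (ne_of_lt (hglt k))⟩)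
  have t4 : Tendsto (fun k => slope f p (g k)) atTop (nhds d) := hs.comp t3
  have hslope : ∀ k, slope f p (g k) ∈ Icc (0 : ℝ) 1 := by
    intro k
    have hfgk : f (g k) = g (k + 1) := by
      simp only [hg]
      rw [← Function.iterate_succ_apply' f (k + 2) c]
    have e : slope f p (g k) = (g (k + 1) - p) / (g k - p) := by
      rw [slope_def_field, hfp, hfgk]
    have hnum : g (k + 1) - p ≤ 0 := sub_nonpos.mpr (hgle (k + 1))
    have hden : g k - p < 0 := sub_neg.mpr (hglt k)
    have hge : g k - p ≤ g (k + 1) - p := by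
      have := (hgmono (Nat.lt_succ_self k)).le
      linarith
    constructor
    · rw [e]
      exact div_nonneg_iff.mpr (Or.inr ⟨hnum, hden.le⟩)
    · rw [e, div_le_one_iff]
      exact Or.inr (Or.inr ⟨hden, hge⟩)
  have hdmem : d ∈ Icc (0 : ℝ) 1 :=
    isClosed_Icc.mem_of_tendsto t4 (Eventually.of_forall hslope)
  exact ⟨p, hpmem, htfull, hfp, abs_le.mpr ⟨by linarith [hdmem.1], hdmem.2⟩⟩
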